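/- Lebourg mean value theorem: Let X be a Banach space and φ: X → ℝ locally Lipschitz. For any x, y ∈ X there exist t ∈ (0,1) and x* ∈ ∂φ(x + t(y − x)) such that φ(y) − φ(x) = ⟨x*, y − x⟩. -/

import Mathlib

open Filter Topology Set Metric

noncomputable def clarkeDeriv {X : Type*} [NormedAddCommGroup X] [NormedSpace ℝ X]
    (φ : X → ℝ) (x h : X) : ℝ :=
  Filter.limsup (fun p : X × ℝ => (φ (p.1 + p.2 • h) - φ p.1) / p.2)
    ((nhds x) ×ˢ (nhdsWithin 0 (Set.Ioi (0 : ℝ))))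


def clarkeSubdiff {X : Type*} [NormedAddCommGroup X] [NormedSpace ℝ X]
    (φ : X → ℝ) (x : X) : Set (X →L[ℝ] ℝ) :=
  {xs | ∀ h, xs h ≤ clarkeDeriv φ x h}

namespace LebourgAux

variable {X : Type*} [NormedAddCommGroup X] [NormedSpace ℝ X]

noncomputable def cq (φ : X → ℝ) (h : X) (p : X × ℝ) : ℝ :=
  (φ (p.1 + p.2 • h) - φ p.1) / p.2

def Lf (z : X) : Filter (X × ℝ) := (nhds z) ×ˢ (nhdsWithin 0 (Set.Ioi (0:ℝ)))

lemma clarkeDeriv_def (φ : X → ℝ) (z h : X) :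
    clarkeDeriv φ z h = limsup (cq φ h) (Lf z) := rfl

instance (z : X) : (Lf z).NeBot := by
  unfold Lf; infer_instance

lemma cq_bound {φ : X → ℝ} {z : X} {K : NNReal} {ε : ℝ} (hε : 0 < ε)
    (hK : LipschitzOnWith K φ (ball z ε)) (h : X) :
    ∀ᶠ p in Lf z, |cq φ h p| ≤ K * ‖h‖ := by
  set δ : ℝ := (ε/2) / (‖h‖ + 1) with hδdef
  have hn : (0:ℝ) ≤ ‖h‖ := norm_nonneg h
  have hδ : 0 < δ := div_pos (half_pos hε) (by positivity)
  have h1 : ∀ᶠ a in 𝓝 z, a ∈ ball z (ε/2) := ball_mem_nhds z (half_pos hε)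
  have h2 : ∀ᶠ b in 𝓝[>] (0:ℝ), b ∈ Ioo 0 δ :=
    Ioo_mem_nhdsGT_of_mem (left_mem_Ico.mpr hδ)
  filter_upwards [h1.prod_mk h2] with p hp
  obtain ⟨hp1, hp2, hp2'⟩ : p.1 ∈ ball z (ε/2) ∧ 0 < p.2 ∧ p.2 < δ := ⟨hp.1, hp.2.1, hp.2.2⟩
  have hδh : δ * ‖h‖ ≤ ε/2 := by
    rw [hδdef, div_mul_eq_mul_div, div_le_iff₀ (by positivity)]
    nlinarith
  have hsm : ‖p.2 • h‖ ≤ ε/2 := by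
    rw [norm_smul, Real.norm_eq_abs, abs_of_pos hp2]
    nlinarith
  have ha : p.1 ∈ ball z ε := mem_of_mem_of_subset hp1 (ball_subset_ball (by linarith))
  have hq : p.1 + p.2 • h ∈ ball z ε := by
    rw [mem_ball] at hp1 ⊢
    calc dist (p.1 + p.2 • h) z ≤ dist (p.1 + p.2 • h) p.1 + dist p.1 z := dist_triangle _ _ _
      _ = ‖p.2 • h‖ + dist p.1 z := by rw [dist_eq_norm, add_sub_cancel_left]
      _ < ε := by linarith
  have key := hK.dist_le_mul _ hq _ ha
  rw [Real.dist_eq, dist_eq_norm, add_sub_cancel_left, norm_smul, Real.norm_eq_abs,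
    abs_of_pos hp2] at key
  unfold cq
  rw [abs_div, abs_of_pos hp2, div_le_iff₀ hp2]
  calc |φ (p.1 + p.2 • h) - φ p.1| ≤ K * (p.2 * ‖h‖) := key
    _ = K * ‖h‖ * p.2 := by ring


lemma cq_bddAbove {φ : X → ℝ} {z : X} {K : NNReal} {ε : ℝ} (hε : 0 < ε)
    (hK : LipschitzOnWith K φ (ball z ε)) (h : X) :
    IsBoundedUnder (· ≤ ·) (Lf z) (cq φ h) :=
  isBoundedUnder_of_eventually_le ((cq_bound hε hK h).mono fun _ hp => (abs_le.1 hp).2)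

lemma cq_bddBelow {φ : X → ℝ} {z : X} {K : NNReal} {ε : ℝ} (hε : 0 < ε)
    (hK : LipschitzOnWith K φ (ball z ε)) (h : X) :
    IsBoundedUnder (· ≥ ·) (Lf z) (cq φ h) :=
  isBoundedUnder_of_eventually_ge ((cq_bound hε hK h).mono fun _ hp => (abs_le.1 hp).1)

lemma cq_cobdd {φ : X → ℝ} {z : X} {K : NNReal} {ε : ℝ} (hε : 0 < ε)
    (hK : LipschitzOnWith K φ (ball z ε)) (h : X) :
    IsCoboundedUnder (· ≤ ·) (Lf z) (cq φ h) :=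
  (cq_bddBelow hε hK h).isCoboundedUnder_le

lemma limsup_comp_le {α β : Type*} {m : Filter α} {Lz : Filter β} {G : α → β}
    (u : β → ℝ) (hG : Tendsto G m Lz)
    (hcb : IsCoboundedUnder (· ≤ ·) m (u ∘ G))
    (hb : IsBoundedUnder (· ≤ ·) Lz u) :
    limsup (u ∘ G) m ≤ limsup u Lz := by
  have hmap : map (u ∘ G) m ≤ map u Lz := by
    rw [← Filter.map_map]; exact map_mono hG
  exact limsSup_le_limsSup_of_le hmap hcb hb

lemma clarkeDeriv_le_bound {φ : X → ℝ} {z : X} {K : NNReal} {ε : ℝ} (hε : 0 < ε)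
    (hK : LipschitzOnWith K φ (ball z ε)) (h : X) :
    clarkeDeriv φ z h ≤ K * ‖h‖ := by
  rw [clarkeDeriv_def]
  exact limsup_le_of_le (cq_cobdd hε hK h)
    ((cq_bound hε hK h).mono fun _ hp => (abs_le.1 hp).2)

lemma clarkeDeriv_zero (φ : X → ℝ) (z : X) : clarkeDeriv φ z 0 = 0 := by
  rw [clarkeDeriv_def]
  have : cq φ (0:X) = fun _ => (0:ℝ) := funext fun p => by simp [cq]
  rw [this]
  exact limsup_const 0

lemma clarkeDeriv_add_le {φ : X → ℝ} {z : X} {K : NNReal} {ε : ℝ} (hε : 0 < ε)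
    (hK : LipschitzOnWith K φ (ball z ε)) (h₁ h₂ : X) :
    clarkeDeriv φ z (h₁ + h₂) ≤ clarkeDeriv φ z h₁ + clarkeDeriv φ z h₂ := by
  set G : X × ℝ → X × ℝ := fun p => (p.1 + p.2 • h₂, p.2) with hGdef
  have hG : Tendsto G (Lf z) (Lf z) := by
    refine Tendsto.prodMk ?_ tendsto_snd
    have h2 : Tendsto (fun p : X × ℝ => p.2 • h₂) (Lf z) (𝓝 ((0:ℝ) • h₂)) :=
      (tendsto_snd.mono_right nhdsWithin_le_nhds).smul_const h₂
    have := (tendsto_fst (f := 𝓝 z) (g := 𝓝[>] (0:ℝ))).add h2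
    simpa [Lf] using this
  have hfun : cq φ (h₁ + h₂) = fun p => (cq φ h₁ ∘ G) p + cq φ h₂ p := by
    funext p
    simp only [cq, Function.comp, hGdef]
    have harg : p.1 + p.2 • (h₁ + h₂) = p.1 + p.2 • h₂ + p.2 • h₁ := by
      rw [smul_add]; abel
    rw [harg, eq_comm, ← add_div, sub_add_sub_cancel]
  have hb1 : ∀ᶠ p in Lf z, |cq φ h₁ (G p)| ≤ K * ‖h₁‖ := hG.eventually (cq_bound hε hK h₁)
  have hbdd1 : IsBoundedUnder (· ≤ ·) (Lf z) (cq φ h₁ ∘ G) :=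
    isBoundedUnder_of_eventually_le (hb1.mono fun _ hp => (abs_le.1 hp).2)
  have hbddg1 : IsBoundedUnder (· ≥ ·) (Lf z) (cq φ h₁ ∘ G) :=
    isBoundedUnder_of_eventually_ge (hb1.mono fun _ hp => (abs_le.1 hp).1)
  rw [clarkeDeriv_def, hfun]
  have hsum : (fun p => (cq φ h₁ ∘ G) p + cq φ h₂ p) = (cq φ h₁ ∘ G) + cq φ h₂ := rfl
  rw [hsum]
  calc limsup ((cq φ h₁ ∘ G) + cq φ h₂) (Lf z)
      ≤ limsup (cq φ h₁ ∘ G) (Lf z) + limsup (cq φ h₂) (Lf z) :=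
        limsup_add_le hbddg1 hbdd1 (cq_cobdd hε hK h₂) (cq_bddAbove hε hK h₂)
    _ ≤ clarkeDeriv φ z h₁ + clarkeDeriv φ z h₂ := by
        rw [clarkeDeriv_def φ z h₁, clarkeDeriv_def φ z h₂]
        exact add_le_add_left
          (limsup_comp_le _ hG hbddg1.isCoboundedUnder_le (cq_bddAbove hε hK h₁)) _


set_option maxHeartbeats 1000000 in
lemma clarkeDeriv_smul {φ : X → ℝ} {z : X} {K : NNReal} {ε : ℝ} (hε : 0 < ε)
    (hK : LipschitzOnWith K φ (ball z ε)) {c : ℝ} (hc : 0 < c) (h : X) :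
    clarkeDeriv φ z (c • h) = c * clarkeDeriv φ z h := by
  set H : X × ℝ → X × ℝ := fun p => (p.1, c * p.2) with hHdef
  set H' : X × ℝ → X × ℝ := fun p => (p.1, p.2 / c) with hH'def
  have hpos : ∀ᶠ p in Lf z, 0 < p.2 :=
    tendsto_snd.eventually (self_mem_nhdsWithin)
  have hH : Tendsto H (Lf z) (Lf z) := by
    refine Tendsto.prodMk tendsto_fst ?_
    rw [tendsto_nhdsWithin_iff]
    constructor
    · have := (tendsto_snd.mono_right nhdsWithin_le_nhds :
        Tendsto (Prod.snd : X × ℝ → ℝ) (Lf z) (𝓝 0)).const_mul c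
      simpa [Lf] using this
    · exact hpos.mono fun p hp => by exact mul_pos hc hp
  have hH' : Tendsto H' (Lf z) (Lf z) := by
    refine Tendsto.prodMk tendsto_fst ?_
    rw [tendsto_nhdsWithin_iff]
    constructor
    · have := (tendsto_snd.mono_right nhdsWithin_le_nhds :
        Tendsto (Prod.snd : X × ℝ → ℝ) (Lf z) (𝓝 0)).div_const c
      simpa [Lf] using this
    · exact hpos.mono fun p hp => by exact div_pos hp hc
  have hb1 : ∀ᶠ p in Lf z, |cq φ h (H p)| ≤ K * ‖h‖ := hH.eventually (cq_bound hε hK h)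
  have hbdd : IsBoundedUnder (· ≤ ·) (Lf z) (cq φ h ∘ H) :=
    isBoundedUnder_of_eventually_le (hb1.mono fun _ hp => (abs_le.1 hp).2)
  have hbddg : IsBoundedUnder (· ≥ ·) (Lf z) (cq φ h ∘ H) :=
    isBoundedUnder_of_eventually_ge (hb1.mono fun _ hp => (abs_le.1 hp).1)
  have e1 : limsup (cq φ h ∘ H) (Lf z) ≤ clarkeDeriv φ z h := by
    rw [clarkeDeriv_def]
    exact limsup_comp_le _ hH hbddg.isCoboundedUnder_le (cq_bddAbove hε hK h)
  have e2 : clarkeDeriv φ z h ≤ limsup (cq φ h ∘ H) (Lf z) := by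
    have hcomp : cq φ h = (cq φ h ∘ H) ∘ H' := by
      funext p
      simp only [Function.comp_apply, hHdef, hH'def]
      rw [mul_div_cancel₀ _ (ne_of_gt hc)]
    have hcob : IsCoboundedUnder (· ≤ ·) (Lf z) ((cq φ h ∘ H) ∘ H') := by
      rw [← hcomp]; exact cq_cobdd hε hK h
    rw [clarkeDeriv_def]
    calc limsup (cq φ h) (Lf z) = limsup ((cq φ h ∘ H) ∘ H') (Lf z) := by rw [← hcomp]
      _ ≤ limsup (cq φ h ∘ H) (Lf z) := limsup_comp_le _ hH' hcob hbdd
  have e : limsup (cq φ h ∘ H) (Lf z) = clarkeDeriv φ z h := le_antisymm e1 e2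
  have hfun : cq φ (c • h) = fun p => c * (cq φ h ∘ H) p := by
    funext p
    simp only [cq, Function.comp_apply, hHdef]
    have harg : p.2 • (c • h) = (c * p.2) • h := by
      rw [smul_smul, mul_comm]
    rw [harg, mul_div_assoc']
    rw [mul_div_mul_left _ _ (ne_of_gt hc)]
  rw [clarkeDeriv_def, hfun, ← e]
  have hmono : Monotone (fun r : ℝ => c * r) := monotone_mul_left_of_nonneg hc.le
  exact (hmono.map_limsup_of_continuousAt (cq φ h ∘ H)
    ((continuous_const.mul continuous_id).continuousAt) hbdd hbddg.isCoboundedUnder_le).symm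


def Gm (x v : X) : ℝ × ℝ → X × ℝ := fun p => (x + p.1 • v, p.2)

lemma tendsto_Gm (x v : X) (t0 : ℝ) :
    Tendsto (Gm x v) (Lf t0) (Lf (x + t0 • v)) := by
  refine Tendsto.prodMk ?_ tendsto_snd
  have h1 : Tendsto (fun t : ℝ => x + t • v) (𝓝 t0) (𝓝 (x + t0 • v)) :=
    (continuous_const.add (continuous_id.smul continuous_const)).tendsto t0
  exact h1.comp tendsto_fst

lemma cq_affine (φ : X → ℝ) (x v : X) (c s t0 : ℝ) :
    ∀ᶠ p in Lf t0, cq (fun t => φ (x + t • v) + c * t) s p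
      = cq φ (s • v) (Gm x v p) + c * s := by
  have hpos : ∀ᶠ p in Lf t0, 0 < p.2 :=
    (tendsto_snd (f := 𝓝 t0)).eventually (self_mem_nhdsWithin)
  filter_upwards [hpos] with p hp
  have hp' : p.2 ≠ 0 := ne_of_gt hp
  simp only [cq, Gm, smul_eq_mul]
  have harg : x + (p.1 + p.2 * s) • v = (x + p.1 • v) + p.2 • (s • v) := by
    rw [add_smul, smul_smul, add_assoc]
  rw [harg]
  field_simp
  ring

lemma chain {φ : X → ℝ} {z : X} {K : NNReal} {ε : ℝ} (hε : 0 < ε)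
    (hK : LipschitzOnWith K φ (ball z ε)) (x v : X) {t0 : ℝ} (c s : ℝ)
    (hz : z = x + t0 • v) :
    clarkeDeriv (fun t => φ (x + t • v) + c * t) t0 s ≤ clarkeDeriv φ z (s • v) + c * s := by
  subst hz
  have hG := tendsto_Gm x v t0
  have hb : ∀ᶠ p in Lf t0, |cq φ (s • v) (Gm x v p)| ≤ K * ‖s • v‖ :=
    hG.eventually (cq_bound hε hK (s • v))
  have hbdd : IsBoundedUnder (· ≤ ·) (Lf t0) (cq φ (s • v) ∘ Gm x v) :=
    isBoundedUnder_of_eventually_le (hb.mono fun _ hp => (abs_le.1 hp).2)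
  have hbddg : IsBoundedUnder (· ≥ ·) (Lf t0) (cq φ (s • v) ∘ Gm x v) :=
    isBoundedUnder_of_eventually_ge (hb.mono fun _ hp => (abs_le.1 hp).1)
  rw [clarkeDeriv_def, limsup_congr (cq_affine φ x v c s t0)]
  have hstep : limsup (fun p => (cq φ (s • v) ∘ Gm x v) p + c * s) (Lf t0)
      = limsup (cq φ (s • v) ∘ Gm x v) (Lf t0) + c * s :=
    limsup_add_const (Lf t0) (cq φ (s • v) ∘ Gm x v) (c * s) hbdd
      hbddg.isCoboundedUnder_le
  rw [show (fun p => cq φ (s • v) (Gm x v p) + c * s)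
      = fun p => (cq φ (s • v) ∘ Gm x v) p + c * s from rfl, hstep, clarkeDeriv_def]
  exact add_le_add_left
    (limsup_comp_le _ hG hbddg.isCoboundedUnder_le (cq_bddAbove hε hK (s • v))) _

lemma extremum_nonneg {ψ : ℝ → ℝ} {t0 : ℝ} {B : ℝ}
    (hloc : IsLocalMin ψ t0 ∨ IsLocalMax ψ t0) (s : ℝ)
    (hb : ∀ᶠ p in Lf t0, cq ψ s p ≤ B) :
    0 ≤ clarkeDeriv ψ t0 s := by
  have hbdd : IsBoundedUnder (· ≤ ·) (Lf t0) (cq ψ s) := isBoundedUnder_of_eventually_le hb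
  obtain hmin | hmax := hloc
  · set J : ℝ → ℝ × ℝ := fun lam => (t0, lam) with hJdef
    have hJ : Tendsto J (𝓝[>] (0:ℝ)) (Lf t0) :=
      Tendsto.prodMk tendsto_const_nhds tendsto_id
    have h1 : Tendsto (fun lam : ℝ => t0 + lam * s) (𝓝[>] (0:ℝ)) (𝓝 t0) := by
      have : Tendsto (fun lam : ℝ => t0 + lam * s) (𝓝 0) (𝓝 (t0 + 0 * s)) :=
        (continuous_const.add (continuous_id.mul continuous_const)).tendsto 0
      simpa using this.mono_left nhdsWithin_le_nhds
    have hev : ∀ᶠ lam in 𝓝[>] (0:ℝ), 0 ≤ cq ψ s (J lam) := by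
      filter_upwards [h1.eventually hmin, self_mem_nhdsWithin] with lam h2 h3
      simp only [cq, hJdef, smul_eq_mul]
      exact div_nonneg (sub_nonneg.2 h2) (le_of_lt h3)
    have hcobJ : IsCoboundedUnder (· ≤ ·) (𝓝[>] (0:ℝ)) (cq ψ s ∘ J) :=
      (isBoundedUnder_of_eventually_ge hev).isCoboundedUnder_le
    calc (0:ℝ) ≤ limsup (cq ψ s ∘ J) (𝓝[>] (0:ℝ)) :=
          le_limsup_of_frequently_le hev.frequently
            (isBoundedUnder_of_eventually_le (hJ.eventually hb))
      _ ≤ limsup (cq ψ s) (Lf t0) := limsup_comp_le _ hJ hcobJ hbdd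
      _ = clarkeDeriv ψ t0 s := (clarkeDeriv_def ψ t0 s).symm
  · set J : ℝ → ℝ × ℝ := fun lam => (t0 - lam * s, lam) with hJdef
    have h1 : Tendsto (fun lam : ℝ => t0 - lam * s) (𝓝[>] (0:ℝ)) (𝓝 t0) := by
      have : Tendsto (fun lam : ℝ => t0 - lam * s) (𝓝 0) (𝓝 (t0 - 0 * s)) :=
        (continuous_const.sub (continuous_id.mul continuous_const)).tendsto 0
      simpa using this.mono_left nhdsWithin_le_nhds
    have hJ : Tendsto J (𝓝[>] (0:ℝ)) (Lf t0) := Tendsto.prodMk h1 tendsto_id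
    have hev : ∀ᶠ lam in 𝓝[>] (0:ℝ), 0 ≤ cq ψ s (J lam) := by
      filter_upwards [h1.eventually hmax, self_mem_nhdsWithin] with lam h2 h3
      simp only [cq, hJdef, smul_eq_mul]
      have harg : t0 - lam * s + lam * s = t0 := by ring
      rw [harg]
      exact div_nonneg (sub_nonneg.2 h2) (le_of_lt h3)
    have hcobJ : IsCoboundedUnder (· ≤ ·) (𝓝[>] (0:ℝ)) (cq ψ s ∘ J) :=
      (isBoundedUnder_of_eventually_ge hev).isCoboundedUnder_le
    calc (0:ℝ) ≤ limsup (cq ψ s ∘ J) (𝓝[>] (0:ℝ)) :=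
          le_limsup_of_frequently_le hev.frequently
            (isBoundedUnder_of_eventually_le (hJ.eventually hb))
      _ ≤ limsup (cq ψ s) (Lf t0) := limsup_comp_le _ hJ hcobJ hbdd
      _ = clarkeDeriv ψ t0 s := (clarkeDeriv_def ψ t0 s).symm

end LebourgAux

open LebourgAux

/-- Lebourg's mean value theorem: for a locally Lipschitz `φ` on a Banach space
and any `x, y` there exist `t ∈ (0,1)` and `x* ∈ ∂φ(x + t(y−x))` with
`φ(y) − φ(x) = ⟨x*, y − x⟩`. -/
theorem lebourg_mean_value {X : Type*} [NormedAddCommGroup X] [NormedSpace ℝ X]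
    [CompleteSpace X] (φ : X → ℝ) (hφ : LocallyLipschitz φ) (x y : X) :
    ∃ t ∈ Set.Ioo (0 : ℝ) 1, ∃ xs ∈ clarkeSubdiff φ (x + t • (y - x)),
      φ y - φ x = xs (y - x) := by
  classical
  set v : X := y - x with hv
  set c : ℝ := φ x - φ y with hc
  set ψ : ℝ → ℝ := fun t => φ (x + t • v) + c * t with hψdef
  have hψcont : Continuous ψ := by
    exact (hφ.continuous.comp (continuous_const.add
      (continuous_id.smul continuous_const))).add (continuous_const.mul continuous_id)
  have hψ0 : ψ 0 = φ x := by simp [hψdef]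
  have hψ1 : ψ 1 = φ x := by
    simp only [hψdef, one_smul, mul_one, hv, hc, add_sub_cancel]
    try ring
  -- find an interior local extremum of ψ
  obtain ⟨t0, ht0, hloc⟩ : ∃ t0 ∈ Set.Ioo (0:ℝ) 1, IsLocalMin ψ t0 ∨ IsLocalMax ψ t0 := by
    obtain ⟨a, ha, hamax⟩ := isCompact_Icc.exists_isMaxOn (Set.nonempty_Icc.2 zero_le_one)
      (hψcont.continuousOn (s := Set.Icc (0:ℝ) 1))
    obtain ⟨b, hb, hbmin⟩ := isCompact_Icc.exists_isMinOn (Set.nonempty_Icc.2 zero_le_one)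
      (hψcont.continuousOn (s := Set.Icc (0:ℝ) 1))
    by_cases hA : φ x < ψ a
    · have ha0 : a ≠ 0 := fun h => by rw [h, hψ0] at hA; exact lt_irrefl _ hA
      have ha1 : a ≠ 1 := fun h => by rw [h, hψ1] at hA; exact lt_irrefl _ hA
      have haI : a ∈ Set.Ioo (0:ℝ) 1 :=
        ⟨lt_of_le_of_ne ha.1 (Ne.symm ha0), lt_of_le_of_ne ha.2 ha1⟩
      exact ⟨a, haI, Or.inr (hamax.isLocalMax (Icc_mem_nhds haI.1 haI.2))⟩
    · by_cases hB : ψ b < φ x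
      · have hb0 : b ≠ 0 := fun h => by rw [h, hψ0] at hB; exact lt_irrefl _ hB
        have hb1 : b ≠ 1 := fun h => by rw [h, hψ1] at hB; exact lt_irrefl _ hB
        have hbI : b ∈ Set.Ioo (0:ℝ) 1 :=
          ⟨lt_of_le_of_ne hb.1 (Ne.symm hb0), lt_of_le_of_ne hb.2 hb1⟩
        exact ⟨b, hbI, Or.inl (hbmin.isLocalMin (Icc_mem_nhds hbI.1 hbI.2))⟩
      · refine ⟨1/2, by norm_num, Or.inl ?_⟩
        have hconst : ∀ t ∈ Set.Icc (0:ℝ) 1, ψ t = φ x := fun t ht =>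
          le_antisymm (le_trans (hamax ht) (not_lt.1 hA)) (le_trans (not_lt.1 hB) (hbmin ht))
        have hmem : Set.Icc (0:ℝ) 1 ∈ 𝓝 (1/2 : ℝ) := Icc_mem_nhds (by norm_num) (by norm_num)
        have h12 : ψ (1/2) = φ x := hconst _ (by norm_num)
        filter_upwards [hmem] with u hu
        rw [h12, hconst u hu]
  -- Lipschitz data at z
  set z : X := x + t0 • v with hz
  obtain ⟨K, sK, hsK, hKlip⟩ := hφ z
  obtain ⟨ε, hε, hball⟩ := Metric.mem_nhds_iff.1 hsK
  have hK' : LipschitzOnWith K φ (ball z ε) := hKlip.mono hball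
  -- key inequalities
  have hderiv : ∀ s : ℝ, 0 ≤ clarkeDeriv φ z (s • v) + c * s := by
    intro s
    have hb2 : ∀ᶠ p in Lf t0, |cq φ (s • v) (Gm x v p)| ≤ K * ‖s • v‖ :=
      (tendsto_Gm x v t0).eventually (cq_bound hε hK' (s • v))
    have hbψ : ∀ᶠ p in Lf t0, cq ψ s p ≤ K * ‖s • v‖ + c * s := by
      filter_upwards [cq_affine φ x v c s t0, hb2] with p h1 h2
      rw [h1]
      exact add_le_add_left (abs_le.1 h2).2 _
    calc (0:ℝ) ≤ clarkeDeriv ψ t0 s := extremum_nonneg hloc s hbψ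
      _ ≤ clarkeDeriv φ z (s • v) + c * s := chain hε hK' x v c s hz
  have key1 : φ y - φ x ≤ clarkeDeriv φ z v := by
    have := hderiv 1
    rw [one_smul, mul_one, hc] at this
    linarith
  have key2 : φ x - φ y ≤ clarkeDeriv φ z (-v) := by
    have := hderiv (-1)
    rw [neg_one_smul, mul_neg_one, hc] at this
    linarith
  -- sublinearity data
  have N_hom : ∀ c' : ℝ, 0 < c' → ∀ h : X, clarkeDeriv φ z (c' • h) = c' * clarkeDeriv φ z h :=
    fun c' hc' h => clarkeDeriv_smul hε hK' hc' h
  have N_add : ∀ h₁ h₂ : X, clarkeDeriv φ z (h₁ + h₂) ≤ clarkeDeriv φ z h₁ + clarkeDeriv φ z h₂ :=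
    fun h₁ h₂ => clarkeDeriv_add_le hε hK' h₁ h₂
  have N_bound : ∀ h : X, clarkeDeriv φ z h ≤ K * ‖h‖ := fun h => clarkeDeriv_le_bound hε hK' h
  -- Hahn–Banach extension
  have hHB : ∃ g : X →ₗ[ℝ] ℝ, g v = φ y - φ x ∧ ∀ h, g h ≤ clarkeDeriv φ z h := by
    by_cases hv0 : v = 0
    · have hyx : φ y - φ x = 0 := by
        have : y = x := sub_eq_zero.1 (hv ▸ hv0)
        rw [this, sub_self]
      obtain ⟨g, hg, hgle⟩ := exists_extension_of_le_sublinear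
        ⟨⊥, 0⟩ (clarkeDeriv φ z) N_hom N_add (fun w => by
          have hw : (w : X) = 0 := (Submodule.mem_bot ℝ).1 w.2
          show (0 : (⊥ : Submodule ℝ X) →ₗ[ℝ] ℝ) w ≤ clarkeDeriv φ z w
          rw [LinearMap.zero_apply, hw, clarkeDeriv_zero])
      exact ⟨g, by rw [hv0, map_zero, hyx], hgle⟩
    · set f : X →ₗ.[ℝ] ℝ := LinearPMap.mkSpanSingleton v (φ y - φ x) hv0 with hfdef
      have hfdom : ∀ w : f.domain, f w ≤ clarkeDeriv φ z w := by
        intro w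
        obtain ⟨c', hc'⟩ := Submodule.mem_span_singleton.1 w.2
        have hw : w = ⟨c' • v, by rw [hc']; exact w.2⟩ := Subtype.ext hc'.symm
        rw [hw]
        rw [LinearPMap.mkSpanSingleton'_apply]
        show c' • (φ y - φ x) ≤ clarkeDeriv φ z (c' • v)
        rcases lt_trichotomy c' 0 with hlt | heq | hgt
        · have harg : c' • v = (-c') • (-v) := by rw [neg_smul, smul_neg, neg_neg]
          rw [harg, N_hom (-c') (by linarith) (-v), smul_eq_mul]
          nlinarith [key2]
        · rw [heq, zero_smul, zero_smul, clarkeDeriv_zero]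
        · rw [N_hom c' hgt v, smul_eq_mul]
          exact mul_le_mul_of_nonneg_left key1 hgt.le
      obtain ⟨g, hg, hgle⟩ := exists_extension_of_le_sublinear f
        (clarkeDeriv φ z) N_hom N_add hfdom
      refine ⟨g, ?_, hgle⟩
      have := hg ⟨v, Submodule.mem_span_singleton_self v⟩
      rw [this]
      exact LinearPMap.mkSpanSingleton_apply ℝ ℝ hv0 (φ y - φ x)
  obtain ⟨g, hgv, hgle⟩ := hHB
  -- continuity
  have hgbnd : ∀ h : X, ‖g h‖ ≤ (K : ℝ) * ‖h‖ := by
    intro h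
    rw [Real.norm_eq_abs, abs_le]
    constructor
    · have h1 : g (-h) ≤ clarkeDeriv φ z (-h) := hgle (-h)
      have h2 : clarkeDeriv φ z (-h) ≤ K * ‖-h‖ := N_bound (-h)
      rw [map_neg] at h1
      rw [norm_neg] at h2
      linarith
    · exact le_trans (hgle h) (N_bound h)
  set xs : X →L[ℝ] ℝ := LinearMap.mkContinuous g K hgbnd with hxsdef
  refine ⟨t0, ht0, xs, ?_, ?_⟩
  · intro h
    show g h ≤ clarkeDeriv φ (x + t0 • (y - x)) h
    rw [← hv, ← hz]
    exact hgle h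
  · show φ y - φ x = g (y - x)
    rw [← hv, hgv]
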